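/- arXiv:1104.5541 — 3 statements merged into one kernel-verified Lean document; each statement's English description precedes it below -/
import Mathlib

section
/- Let Λ ⊆ ℝⁿ be a full-rank lattice and let k ≥ 1 be an integer. Then a point v ∈ ℝⁿ lies in the interior of B_k(Λ) if and only if ι(v) = k − 1 and μ(v) = 0. -/
open Set

noncomputable section

/-- Euclidean `n`-space, identified with the tangent plane at the basepoint of a flat torus. -/
abbrev Euc (n : ℕ) := EuclideanSpace ℝ (Fin n)

/-- `Λ ⊆ ℝⁿ` is a full-rank lattice: the image of `ℤⁿ` under some `L ∈ GL(n,ℝ)`,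
equivalently the set of integer combinations of a basis of `ℝⁿ`. -/
def IsFullLattice {n : ℕ} (Λ : Set (Euc n)) : Prop :=
  ∃ b : Module.Basis (Fin n) ℝ (Euc n),
    Λ = {v : Euc n | ∃ m : Fin n → ℤ, v = ∑ i, (m i : ℝ) • b i}

/-- The Brillouin hyperplane `V_λ = {v : ‖v‖ = ‖v - λ‖}` (perpendicular bisector of `0` and `λ`). -/
def Bplane {n : ℕ} (lam : Euc n) : Set (Euc n) :=
  {v : Euc n | ‖v‖ = ‖v - lam‖}

/-- `μ(v) = #{λ ∈ Λ \ {0} : ‖v − λ‖ = ‖v‖}`. -/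
def mu {n : ℕ} (Λ : Set (Euc n)) (v : Euc n) : ℕ :=
  Set.ncard {lam : Euc n | lam ∈ Λ ∧ lam ≠ 0 ∧ ‖v - lam‖ = ‖v‖}

/-- The focal component `σ_i(Λ) = {v : μ(v) = i − 1}`. -/
def focalComp {n : ℕ} (Λ : Set (Euc n)) (i : ℕ) : Set (Euc n) :=
  {v : Euc n | mu Λ v = i - 1}

/-- The Brillouin set `B_k(Λ) = {v : #{λ ∈ Λ : ‖v − λ‖ ≤ ‖v‖} = k}` (here `λ = 0` is counted). -/
def brillouin {n : ℕ} (Λ : Set (Euc n)) (k : ℕ) : Set (Euc n) :=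
  {v : Euc n | Set.ncard {lam : Euc n | lam ∈ Λ ∧ ‖v - lam‖ ≤ ‖v‖} = k}

/-- `ι(v) = #{λ ∈ Λ \ {0} : V_λ meets the open segment from 0 to v}`. -/
def iota {n : ℕ} (Λ : Set (Euc n)) (v : Euc n) : ℕ :=
  Set.ncard {lam : Euc n | lam ∈ Λ ∧ lam ≠ 0 ∧
    ∃ t : ℝ, 0 < t ∧ t < 1 ∧ t • v ∈ Bplane lam}

open RealInnerProductSpace in
/-- The bisector of `0` and `lam ≠ 0` crosses the open segment `(0, v)` iff `lam` is strictly
closer to `v` than `0` is. -/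
lemma bplane_seg_iff {n : ℕ} {v lam : Euc n} (hlam : lam ≠ 0) :
    (∃ t : ℝ, 0 < t ∧ t < 1 ∧ t • v ∈ Bplane lam) ↔ ‖v - lam‖ < ‖v‖ := by
  have hlampos : 0 < ‖lam‖ ^ 2 := by
    have := norm_pos_iff.mpr hlam; positivity
  have hmem : ∀ t : ℝ, (t • v ∈ Bplane lam ↔ 2 * t * ⟪v, lam⟫ = ‖lam‖ ^ 2) := by
    intro t
    have h1 : ‖t • v - lam‖ ^ 2 = ‖t • v‖ ^ 2 - 2 * (t * ⟪v, lam⟫) + ‖lam‖ ^ 2 := by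
      rw [norm_sub_sq_real, real_inner_smul_left]
    constructor
    · intro h
      have : ‖t • v‖ ^ 2 = ‖t • v - lam‖ ^ 2 := by rw [h]
      nlinarith
    · intro h
      have h2 : ‖t • v‖ ^ 2 = ‖t • v - lam‖ ^ 2 := by rw [h1]; linarith
      exact (pow_left_inj₀ (norm_nonneg _) (norm_nonneg _) two_ne_zero).mp h2
  have hexp : ‖v - lam‖ ^ 2 = ‖v‖ ^ 2 - 2 * ⟪v, lam⟫ + ‖lam‖ ^ 2 := norm_sub_sq_real v lam
  constructor
  · rintro ⟨t, ht0, ht1, hb⟩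
    rw [hmem t] at hb
    have hip : 0 < ⟪v, lam⟫ := by nlinarith
    have hsq : ‖v - lam‖ ^ 2 < ‖v‖ ^ 2 := by nlinarith
    exact lt_of_pow_lt_pow_left₀ 2 (norm_nonneg v) hsq
  · intro h
    have hsq : ‖v - lam‖ ^ 2 < ‖v‖ ^ 2 := by
      have := norm_nonneg (v - lam); nlinarith
    have hip : 0 < ⟪v, lam⟫ := by nlinarith
    refine ⟨‖lam‖ ^ 2 / (2 * ⟪v, lam⟫), by positivity, ?_, ?_⟩
    · rw [div_lt_one (by positivity)]; nlinarith
    · rw [hmem]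
      have h2ip : (2:ℝ) * ⟪v, lam⟫ ≠ 0 := by positivity
      calc 2 * (‖lam‖ ^ 2 / (2 * ⟪v, lam⟫)) * ⟪v, lam⟫
          = ‖lam‖ ^ 2 / (2 * ⟪v, lam⟫) * (2 * ⟪v, lam⟫) := by ring
        _ = ‖lam‖ ^ 2 := div_mul_cancel₀ _ h2ip

/-- A full lattice meets every closed ball in a finite set. -/
lemma lattice_inter_finite {n : ℕ} {Λ : Set (Euc n)} (hΛ : IsFullLattice Λ)
    (c : Euc n) (r : ℝ) : (Λ ∩ Metric.closedBall c r).Finite := by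
  obtain ⟨b, hb⟩ := hΛ
  set L := Submodule.span ℤ (Set.range b) with hL
  have hΛeq : Λ = (L : Set (Euc n)) := by
    rw [hb]; ext x
    simp only [Set.mem_setOf_eq, SetLike.mem_coe, hL, Submodule.mem_span_range_iff_exists_fun]
    constructor
    · rintro ⟨m, rfl⟩
      exact ⟨m, by simp_rw [← Int.cast_smul_eq_zsmul ℝ]⟩
    · rintro ⟨m, rfl⟩
      exact ⟨m, by simp_rw [← Int.cast_smul_eq_zsmul ℝ]⟩
  have hd : DiscreteTopology L := inferInstance
  have hclosed : IsClosed (L : Set (Euc n)) := by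
    haveI : DiscreteTopology L.toAddSubgroup := hd
    exact AddSubgroup.isClosed_of_discrete (H := L.toAddSubgroup)
  have hcomp : IsCompact ((L : Set (Euc n)) ∩ Metric.closedBall c r) :=
    (isCompact_closedBall c r).inter_left hclosed
  have hdisc : DiscreteTopology (((L : Set (Euc n)) ∩ Metric.closedBall c r : Set (Euc n))) :=
    DiscreteTopology.of_subset hd Set.inter_subset_left
  rw [hΛeq]
  exact hcomp.finite (isDiscrete_iff_discreteTopology.mpr hdisc)

/-- Near `v`, every strict inequality `‖v - λ‖ ≷ ‖v‖` over the lattice persists. -/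
lemma eventually_stable {n : ℕ} {Λ : Set (Euc n)} (hΛ : IsFullLattice Λ) (v : Euc n) :
    ∀ᶠ w in nhds v,
      (∀ lam ∈ Λ, ‖v‖ < ‖v - lam‖ → ‖w‖ < ‖w - lam‖) ∧
      (∀ lam ∈ Λ, ‖v - lam‖ < ‖v‖ → ‖w - lam‖ < ‖w‖) := by
  set R := 2 * ‖v‖ + 2 with hR
  have hT : (Λ ∩ Metric.closedBall 0 R).Finite := lattice_inter_finite hΛ 0 R
  have h1 : ∀ᶠ w in nhds v, ∀ lam ∈ Λ ∩ Metric.closedBall 0 R,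
      (‖v‖ < ‖v - lam‖ → ‖w‖ < ‖w - lam‖) ∧ (‖v - lam‖ < ‖v‖ → ‖w - lam‖ < ‖w‖) := by
    rw [Filter.eventually_all_finite hT]
    intro lam _
    have hc1 : ContinuousAt (fun w : Euc n => ‖w‖) v := continuous_norm.continuousAt
    have hc2 : ContinuousAt (fun w : Euc n => ‖w - lam‖) v :=
      ((continuous_id.sub continuous_const).norm).continuousAt
    refine Filter.Eventually.and ?_ ?_
    · by_cases h : ‖v‖ < ‖v - lam‖
      · exact (Filter.Tendsto.eventually_lt hc1 hc2 h).mono fun w hw _ => hw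
      · exact Filter.Eventually.of_forall fun w hcon => absurd hcon h
    · by_cases h : ‖v - lam‖ < ‖v‖
      · exact (Filter.Tendsto.eventually_lt hc2 hc1 h).mono fun w hw _ => hw
      · exact Filter.Eventually.of_forall fun w hcon => absurd hcon h
  have hball : ∀ᶠ w in nhds v, dist w v < 1 :=
    Filter.eventually_mem_set.mpr (Metric.ball_mem_nhds v one_pos)
  filter_upwards [h1, hball] with w hw1 hwd
  have hwv : ‖w - v‖ < 1 := by rwa [dist_eq_norm] at hwd
  have hwn : ‖w‖ < ‖v‖ + 1 := by
    have := norm_sub_norm_le w v; linarith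
  constructor
  · intro lam hlamΛ hlt
    by_cases hlam : lam ∈ Metric.closedBall 0 R
    · exact (hw1 lam ⟨hlamΛ, hlam⟩).1 hlt
    · have hfar : R < ‖lam‖ := by
        rw [Metric.mem_closedBall, dist_zero_right, not_le] at hlam; exact hlam
      have h2 : ‖lam‖ - ‖w‖ ≤ ‖w - lam‖ := by
        have := norm_sub_norm_le lam w
        rwa [norm_sub_rev] at this
      rw [hR] at hfar; linarith
  · intro lam hlamΛ hlt
    by_cases hlam : lam ∈ Metric.closedBall 0 R
    · exact (hw1 lam ⟨hlamΛ, hlam⟩).2 hlt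
    · exfalso
      have hfar : R < ‖lam‖ := by
        rw [Metric.mem_closedBall, dist_zero_right, not_le] at hlam; exact hlam
      have h2 : ‖lam‖ - ‖v‖ ≤ ‖v - lam‖ := by
        have := norm_sub_norm_le lam v
        rwa [norm_sub_rev] at this
      rw [hR] at hfar; linarith

/-- Splitting the closed count at `w` as `0`, the strictly-closer points, and the equidistant
points. -/
lemma count_split {n : ℕ} {Λ : Set (Euc n)} (hΛ : IsFullLattice Λ) (h0 : (0:Euc n) ∈ Λ)
    (w : Euc n) :
    Set.ncard {lam : Euc n | lam ∈ Λ ∧ ‖w - lam‖ ≤ ‖w‖}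
      = 1 + Set.ncard {lam : Euc n | lam ∈ Λ ∧ lam ≠ 0 ∧ ‖w - lam‖ < ‖w‖} + mu Λ w := by
  set S := {lam : Euc n | lam ∈ Λ ∧ ‖w - lam‖ ≤ ‖w‖} with hS
  set A := {lam : Euc n | lam ∈ Λ ∧ lam ≠ 0 ∧ ‖w - lam‖ < ‖w‖} with hA
  set M := {lam : Euc n | lam ∈ Λ ∧ lam ≠ 0 ∧ ‖w - lam‖ = ‖w‖} with hM
  have hSfin : S.Finite := by
    refine (lattice_inter_finite hΛ 0 (2 * ‖w‖)).subset ?_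
    rintro lam ⟨h1, h2⟩
    refine ⟨h1, ?_⟩
    rw [Metric.mem_closedBall, dist_zero_right]
    have h3 := norm_sub_norm_le lam w
    rw [norm_sub_rev] at h3
    linarith
  have hAsub : A ⊆ S := fun lam ⟨h1, _, h3⟩ => ⟨h1, le_of_lt h3⟩
  have hMsub : M ⊆ S := fun lam ⟨h1, _, h3⟩ => ⟨h1, le_of_eq h3⟩
  have hAfin : A.Finite := hSfin.subset hAsub
  have hMfin : M.Finite := hSfin.subset hMsub
  have hSeq : S = insert 0 (A ∪ M) := by
    ext lam
    simp only [hS, hA, hM, Set.mem_setOf_eq, Set.mem_insert_iff, Set.mem_union]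
    constructor
    · rintro ⟨h1, h2⟩
      rcases eq_or_ne lam 0 with rfl | hne
      · exact Or.inl rfl
      · rcases lt_or_eq_of_le h2 with h3 | h3
        · exact Or.inr (Or.inl ⟨h1, hne, h3⟩)
        · exact Or.inr (Or.inr ⟨h1, hne, h3⟩)
    · rintro (rfl | ⟨h1, _, h3⟩ | ⟨h1, _, h3⟩)
      · exact ⟨h0, by simp⟩
      · exact ⟨h1, le_of_lt h3⟩
      · exact ⟨h1, le_of_eq h3⟩
  have h0nm : (0 : Euc n) ∉ A ∪ M := by
    rintro (⟨_, h2, _⟩ | ⟨_, h2, _⟩) <;> exact h2 rfl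
  have hdisj : Disjoint A M := by
    rw [Set.disjoint_left]
    rintro lam ⟨_, _, h3⟩ ⟨_, _, h4⟩
    exact absurd h4 (ne_of_lt h3)
  rw [hSeq, Set.ncard_insert_of_notMem h0nm (hAfin.union hMfin),
    Set.ncard_union_eq hdisj hAfin hMfin, mu, ← hM]
  omega

/-- A point `v` lies in the interior of the Brillouin set `B_k(Λ)` if and only if
`ι(v) = k − 1` and `μ(v) = 0`. -/
theorem mem_interior_brillouin_iff {n : ℕ} (Λ : Set (Euc n)) (hΛ : IsFullLattice Λ)
    (k : ℕ) (hk : 1 ≤ k) (v : Euc n) :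
    v ∈ interior (brillouin Λ k) ↔ iota Λ v = k - 1 ∧ mu Λ v = 0 := by
  have h0 : (0 : Euc n) ∈ Λ := by
    obtain ⟨b, hb⟩ := hΛ
    rw [hb]; exact ⟨0, by simp⟩
  have hiota : iota Λ v = Set.ncard {lam : Euc n | lam ∈ Λ ∧ lam ≠ 0 ∧ ‖v - lam‖ < ‖v‖} := by
    unfold iota; congr 1; ext lam
    simp only [Set.mem_setOf_eq]
    constructor
    · rintro ⟨h1, h2, h3⟩; exact ⟨h1, h2, (bplane_seg_iff h2).mp h3⟩
    · rintro ⟨h1, h2, h3⟩; exact ⟨h1, h2, (bplane_seg_iff h2).mpr h3⟩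
  have hSfin : ∀ w : Euc n, {lam : Euc n | lam ∈ Λ ∧ ‖w - lam‖ ≤ ‖w‖}.Finite := by
    intro w
    refine (lattice_inter_finite hΛ 0 (2 * ‖w‖)).subset ?_
    rintro lam ⟨h1, h2⟩
    refine ⟨h1, ?_⟩
    rw [Metric.mem_closedBall, dist_zero_right]
    have h3 := norm_sub_norm_le lam w
    rw [norm_sub_rev] at h3
    linarith
  have hMfin : {lam : Euc n | lam ∈ Λ ∧ lam ≠ 0 ∧ ‖v - lam‖ = ‖v‖}.Finite :=
    (hSfin v).subset fun lam ⟨h1, _, h3⟩ => ⟨h1, le_of_eq h3⟩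
  constructor
  · intro h
    have hvB : v ∈ brillouin Λ k := interior_subset h
    simp only [brillouin, Set.mem_setOf_eq] at hvB
    have hmu0 : mu Λ v = 0 := by
      by_contra hmu
      obtain ⟨lam₀, hl0Λ, hl0ne, hl0eq⟩ :=
        Set.nonempty_of_ncard_ne_zero (s := {lam : Euc n | lam ∈ Λ ∧ lam ≠ 0 ∧ ‖v - lam‖ = ‖v‖})
          hmu
      rw [mem_interior_iff_mem_nhds] at h
      have hev := (Filter.eventually_mem_set.mpr h).and (eventually_stable hΛ v)
      obtain ⟨δ, hδ, hprop⟩ := Metric.eventually_nhds_iff.mp hev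
      set s := δ / (2 * (‖lam₀‖ + 1)) with hs
      have hspos : 0 < s := by positivity
      set w := v - s • lam₀ with hwdef
      have hdist : dist w v < δ := by
        rw [dist_eq_norm]
        have : w - v = -(s • lam₀) := by rw [hwdef]; abel
        rw [this, norm_neg, norm_smul, Real.norm_eq_abs, abs_of_pos hspos]
        have h1 : ‖lam₀‖ < ‖lam₀‖ + 1 := by linarith
        have h2 : s * ‖lam₀‖ ≤ s * (‖lam₀‖ + 1) := by nlinarith [norm_nonneg lam₀]
        have h3 : s * (‖lam₀‖ + 1) = δ / 2 := by
          rw [hs]; field_simp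
        linarith
      obtain ⟨hwB, hwst, _⟩ := hprop hdist
      simp only [brillouin, Set.mem_setOf_eq] at hwB
      -- the count at w is strictly smaller than at v
      have hl0S : lam₀ ∈ {lam : Euc n | lam ∈ Λ ∧ ‖v - lam‖ ≤ ‖v‖} := ⟨hl0Λ, le_of_eq hl0eq⟩
      have hkey : ‖w‖ < ‖w - lam₀‖ := by
        have hsm : ∀ x : Euc n, ‖s • x‖ ^ 2 = s ^ 2 * ‖x‖ ^ 2 := by
          intro x; rw [norm_smul, Real.norm_eq_abs, mul_pow, sq_abs]
        have e1 : ‖w - lam₀‖ ^ 2 = ‖v - lam₀‖ ^ 2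
            - 2 * (s * (inner ℝ (v - lam₀) lam₀ : ℝ)) + s ^ 2 * ‖lam₀‖ ^ 2 := by
          have : w - lam₀ = (v - lam₀) - s • lam₀ := by rw [hwdef]; abel
          rw [this, norm_sub_sq_real, real_inner_smul_right, hsm]
        have e2 : ‖w‖ ^ 2 = ‖v‖ ^ 2 - 2 * (s * (inner ℝ v lam₀ : ℝ)) + s ^ 2 * ‖lam₀‖ ^ 2 := by
          rw [hwdef, norm_sub_sq_real, real_inner_smul_right, hsm]
        have e3 : (inner ℝ (v - lam₀) lam₀ : ℝ) = (inner ℝ v lam₀ : ℝ) - ‖lam₀‖ ^ 2 := by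
          rw [inner_sub_left, real_inner_self_eq_norm_sq]
        have hl0pos : 0 < ‖lam₀‖ ^ 2 := by
          have := norm_pos_iff.mpr hl0ne; positivity
        have hsq : ‖w‖ ^ 2 < ‖w - lam₀‖ ^ 2 := by
          have h4 : ‖v - lam₀‖ ^ 2 = ‖v‖ ^ 2 := by rw [hl0eq]
          nlinarith
        exact lt_of_pow_lt_pow_left₀ 2 (norm_nonneg _) hsq
      have hsub : {lam : Euc n | lam ∈ Λ ∧ ‖w - lam‖ ≤ ‖w‖}
          ⊆ {lam : Euc n | lam ∈ Λ ∧ ‖v - lam‖ ≤ ‖v‖} \ {lam₀} := by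
        rintro lam ⟨h1, h2⟩
        refine ⟨⟨h1, ?_⟩, ?_⟩
        · by_contra hc
          exact absurd h2 (not_le.mpr (hwst lam h1 (not_le.mp hc)))
        · rintro rfl
          exact absurd h2 (not_le.mpr hkey)
      have hle : Set.ncard {lam : Euc n | lam ∈ Λ ∧ ‖w - lam‖ ≤ ‖w‖}
          ≤ Set.ncard ({lam : Euc n | lam ∈ Λ ∧ ‖v - lam‖ ≤ ‖v‖} \ {lam₀}) :=
        Set.ncard_le_ncard hsub ((hSfin v).diff)
      have hlt : Set.ncard ({lam : Euc n | lam ∈ Λ ∧ ‖v - lam‖ ≤ ‖v‖} \ {lam₀})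
          < Set.ncard {lam : Euc n | lam ∈ Λ ∧ ‖v - lam‖ ≤ ‖v‖} :=
        Set.ncard_diff_singleton_lt_of_mem hl0S (hSfin v)
      rw [hwB] at hle
      rw [hvB] at hlt
      omega
    refine ⟨?_, hmu0⟩
    have hc := count_split hΛ h0 v
    rw [hvB, hmu0] at hc
    rw [hiota]
    omega
  · rintro ⟨hι, hμ⟩
    rw [mem_interior_iff_mem_nhds, ← Filter.eventually_mem_set]
    filter_upwards [eventually_stable hΛ v] with w hw
    have hMempty : {lam : Euc n | lam ∈ Λ ∧ lam ≠ 0 ∧ ‖v - lam‖ = ‖v‖} = ∅ := by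
      rw [mu] at hμ
      exact (Set.ncard_eq_zero hMfin).mp hμ
    have hEq : {lam : Euc n | lam ∈ Λ ∧ ‖w - lam‖ ≤ ‖w‖}
        = {lam : Euc n | lam ∈ Λ ∧ ‖v - lam‖ ≤ ‖v‖} := by
      ext lam
      simp only [Set.mem_setOf_eq]
      constructor
      · rintro ⟨h1, h2⟩
        refine ⟨h1, ?_⟩
        by_contra hc
        exact absurd h2 (not_le.mpr (hw.1 lam h1 (not_le.mp hc)))
      · rintro ⟨h1, h2⟩
        rcases eq_or_ne lam 0 with rfl | hne
        · exact ⟨h1, by simp⟩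
        · have hstrict : ‖v - lam‖ < ‖v‖ := by
            rcases lt_or_eq_of_le h2 with h3 | h3
            · exact h3
            · exfalso
              have : lam ∈ {lam : Euc n | lam ∈ Λ ∧ lam ≠ 0 ∧ ‖v - lam‖ = ‖v‖} := ⟨h1, hne, h3⟩
              rw [hMempty] at this
              exact this
          exact ⟨h1, le_of_lt (hw.2 lam h1 hstrict)⟩
    show w ∈ brillouin Λ k
    simp only [brillouin, Set.mem_setOf_eq]
    rw [hEq, count_split hΛ h0 v]
    rw [hiota] at hι
    rw [hι, hμ]
    omega
end
end

section
/- Let n ≥ 2, let Λ, Λ̃ ⊆ ℝⁿ be full-rank lattices, and let φ : ℝⁿ → ℝⁿ be a focal equivalence between Λ and Λ̃ (a homeomorphism with φ(0) = 0 and φ(σ_i(Λ)) = σ_i(Λ̃) for all i ≥ 1). Then φ(B_k(Λ)) = B_k(Λ̃) for every integer k ≥ 1. -/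
open Set

noncomputable section

-- finiteness of lattice points in a ball
lemma lattice_ball_finite {n : ℕ} {Λ : Set (Euc n)} (h : IsFullLattice Λ) (R : ℝ) :
    (Λ ∩ Metric.closedBall (0 : Euc n) R).Finite := by
  obtain ⟨b, rfl⟩ := h
  set g : (Fin n → ℤ) → Euc n := fun m => ∑ i, (m i : ℝ) • b i with hg
  have hcoord : ∀ (m : Fin n → ℤ) (i : Fin n), b.coord i (g m) = m i := by
    intro m i
    simp [g, Module.Basis.coord_apply, map_sum, map_smul, Module.Basis.repr_self,
      Finsupp.single_apply]
  set C : Fin n → ℝ := fun i => ‖(LinearMap.toContinuousLinearMap (b.coord i))‖ * R with hC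
  set N : Fin n → ℤ := fun i => ⌈C i⌉ with hN
  have hsub : {v : Euc n | ∃ m : Fin n → ℤ, v = ∑ i, (m i : ℝ) • b i} ∩
      Metric.closedBall (0 : Euc n) R ⊆ g '' (Set.Icc (fun i => -(N i)) N) := by
    rintro v ⟨⟨m, rfl⟩, hv⟩
    refine ⟨m, ?_, rfl⟩
    rw [Set.mem_Icc]
    have hb : ∀ i, |(m i : ℝ)| ≤ C i := by
      intro i
      have := (LinearMap.toContinuousLinearMap (b.coord i)).le_opNorm (g m)
      rw [mem_closedBall_zero_iff] at hv
      simp only [LinearMap.coe_toContinuousLinearMap'] at this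
      rw [hcoord m i] at this
      calc |(m i : ℝ)| = ‖(m i : ℝ)‖ := rfl
        _ ≤ _ := this
        _ ≤ C i := by
            exact mul_le_mul_of_nonneg_left hv (norm_nonneg _)
    constructor <;> intro i <;>
    · have := hb i
      have h2 : |(m i : ℝ)| ≤ (N i : ℝ) := this.trans (Int.le_ceil _)
      rw [← Int.cast_abs, Int.cast_le] at h2
      rw [abs_le] at h2
      simp only [Pi.neg_apply]
      omega
  exact ((Set.finite_Icc _ _).image g).subset hsub


open RealInnerProductSpace in
lemma mem_bplane_iff {n : ℕ} (lam w : Euc n) :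
    w ∈ Bplane lam ↔ 2 * ⟪w, lam⟫ = ‖lam‖ ^ 2 := by
  have h1 : ‖w - lam‖ ^ 2 = ‖w‖ ^ 2 - 2 * ⟪w, lam⟫ + ‖lam‖ ^ 2 :=
    norm_sub_sq_real w lam
  constructor
  · intro h
    have : ‖w‖ ^ 2 = ‖w - lam‖ ^ 2 := by rw [h]
    rw [h1] at this; linarith
  · intro h
    have h2 : ‖w‖ ^ 2 = ‖w - lam‖ ^ 2 := by rw [h1]; linarith
    exact (sq_eq_sq₀ (norm_nonneg _) (norm_nonneg _)).mp h2

open RealInnerProductSpace in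
lemma norm_sub_lt_iff {n : ℕ} (lam v : Euc n) :
    ‖v - lam‖ < ‖v‖ ↔ ‖lam‖ ^ 2 < 2 * ⟪v, lam⟫ := by
  have h1 : ‖v - lam‖ ^ 2 = ‖v‖ ^ 2 - 2 * ⟪v, lam⟫ + ‖lam‖ ^ 2 :=
    norm_sub_sq_real v lam
  rw [← pow_lt_pow_iff_left₀ (norm_nonneg _) (norm_nonneg _) two_ne_zero, h1]
  constructor <;> intro h <;> linarith

open RealInnerProductSpace in
lemma norm_sub_eq_iff {n : ℕ} (lam v : Euc n) :
    ‖v - lam‖ = ‖v‖ ↔ ‖lam‖ ^ 2 = 2 * ⟪v, lam⟫ := by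
  rw [← sq_eq_sq₀ (norm_nonneg _) (norm_nonneg _)]
  have h1 : ‖v - lam‖ ^ 2 = ‖v‖ ^ 2 - 2 * ⟪v, lam⟫ + ‖lam‖ ^ 2 :=
    norm_sub_sq_real v lam
  rw [h1]
  constructor <;> intro h <;> linarith

open RealInnerProductSpace in
lemma smul_mem_bplane_iff {n : ℕ} (lam v : Euc n) (t : ℝ) :
    t • v ∈ Bplane lam ↔ 2 * t * ⟪v, lam⟫ = ‖lam‖ ^ 2 := by
  rw [mem_bplane_iff, real_inner_smul_left]; ring_nf

open RealInnerProductSpace in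
/-- The open-segment crossing condition is equivalent to strict closeness. -/
lemma segment_iff {n : ℕ} (lam v : Euc n) (hlam : lam ≠ 0) :
    (∃ t : ℝ, 0 < t ∧ t < 1 ∧ t • v ∈ Bplane lam) ↔ ‖v - lam‖ < ‖v‖ := by
  have hl2 : (0:ℝ) < ‖lam‖ ^ 2 := by have := norm_pos_iff.mpr hlam; positivity
  rw [norm_sub_lt_iff]
  constructor
  · rintro ⟨t, ht0, ht1, ht⟩
    rw [smul_mem_bplane_iff] at ht
    have hip : 0 < ⟪v, lam⟫ := by nlinarith
    nlinarith
  · intro h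
    have hip : 0 < ⟪v, lam⟫ := by nlinarith
    refine ⟨‖lam‖ ^ 2 / (2 * ⟪v, lam⟫), by positivity, ?_, ?_⟩
    · rw [div_lt_one (by positivity)]; exact h
    · rw [smul_mem_bplane_iff]
      have h2 : (2 * ⟪v, lam⟫) ≠ 0 := by positivity
      calc 2 * (‖lam‖ ^ 2 / (2 * ⟪v, lam⟫)) * ⟪v, lam⟫
          = ‖lam‖ ^ 2 * ((2 * ⟪v, lam⟫) / (2 * ⟪v, lam⟫)) := by ring
        _ = ‖lam‖ ^ 2 := by rw [div_self h2, mul_one]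





lemma zero_mem_lattice {n : ℕ} {Λ : Set (Euc n)} (h : IsFullLattice Λ) : (0 : Euc n) ∈ Λ := by
  obtain ⟨b, rfl⟩ := h
  exact ⟨0, by simp⟩

lemma subset_ball {n : ℕ} (Λ : Set (Euc n)) (v : Euc n) :
    {lam : Euc n | lam ∈ Λ ∧ ‖v - lam‖ ≤ ‖v‖} ⊆ Λ ∩ Metric.closedBall 0 (2 * ‖v‖) := by
  rintro lam ⟨h1, h2⟩
  refine ⟨h1, ?_⟩
  rw [mem_closedBall_zero_iff]
  calc ‖lam‖ = ‖v - (v - lam)‖ := by congr 1; abel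
    _ ≤ ‖v‖ + ‖v - lam‖ := norm_sub_le _ _
    _ ≤ 2 * ‖v‖ := by linarith

lemma leSet_finite {n : ℕ} {Λ : Set (Euc n)} (h : IsFullLattice Λ) (v : Euc n) :
    {lam : Euc n | lam ∈ Λ ∧ ‖v - lam‖ ≤ ‖v‖}.Finite :=
  (lattice_ball_finite h _).subset (subset_ball Λ v)

lemma muSet_finite {n : ℕ} {Λ : Set (Euc n)} (h : IsFullLattice Λ) (v : Euc n) :
    {lam : Euc n | lam ∈ Λ ∧ lam ≠ 0 ∧ ‖v - lam‖ = ‖v‖}.Finite :=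
  (leSet_finite h v).subset (fun lam ⟨h1, _, h3⟩ => ⟨h1, le_of_eq h3⟩)

lemma ltSet_finite {n : ℕ} {Λ : Set (Euc n)} (h : IsFullLattice Λ) (v : Euc n) :
    {lam : Euc n | lam ∈ Λ ∧ lam ≠ 0 ∧ ‖v - lam‖ < ‖v‖}.Finite :=
  (leSet_finite h v).subset (fun lam ⟨h1, _, h3⟩ => ⟨h1, le_of_lt h3⟩)

lemma iota_eq_ltSet {n : ℕ} (Λ : Set (Euc n)) (v : Euc n) :
    iota Λ v = {lam : Euc n | lam ∈ Λ ∧ lam ≠ 0 ∧ ‖v - lam‖ < ‖v‖}.ncard := by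
  unfold iota
  congr 1
  ext lam
  simp only [mem_setOf_eq, and_congr_right_iff]
  intro _ hlam
  constructor
  · rintro ⟨t, h1, h2, h3⟩
    exact (segment_iff lam v hlam).mp ⟨t, h1, h2, h3⟩
  · intro h
    obtain ⟨t, h1, h2, h3⟩ := (segment_iff lam v hlam).mpr h
    exact ⟨t, h1, h2, h3⟩

lemma count_decomp {n : ℕ} {Λ : Set (Euc n)} (h : IsFullLattice Λ) (v : Euc n) :
    {lam : Euc n | lam ∈ Λ ∧ ‖v - lam‖ ≤ ‖v‖}.ncard = 1 + iota Λ v + mu Λ v := by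
  set Slt := {lam : Euc n | lam ∈ Λ ∧ lam ≠ 0 ∧ ‖v - lam‖ < ‖v‖} with hSlt
  set Seq := {lam : Euc n | lam ∈ Λ ∧ lam ≠ 0 ∧ ‖v - lam‖ = ‖v‖} with hSeq
  have hdecomp : {lam : Euc n | lam ∈ Λ ∧ ‖v - lam‖ ≤ ‖v‖} = insert 0 (Slt ∪ Seq) := by
    ext lam
    simp only [mem_setOf_eq, mem_insert_iff, mem_union, hSlt, hSeq]
    constructor
    · rintro ⟨h1, h2⟩
      by_cases h0 : lam = 0
      · exact Or.inl h0
      · rcases lt_or_eq_of_le h2 with h3 | h3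
        · exact Or.inr (Or.inl ⟨h1, h0, h3⟩)
        · exact Or.inr (Or.inr ⟨h1, h0, h3⟩)
    · rintro (rfl | ⟨h1, _, h3⟩ | ⟨h1, _, h3⟩)
      · exact ⟨zero_mem_lattice h, by simp⟩
      · exact ⟨h1, le_of_lt h3⟩
      · exact ⟨h1, le_of_eq h3⟩
  have hfin : (Slt ∪ Seq).Finite := (ltSet_finite h v).union (muSet_finite h v)
  have h0 : (0 : Euc n) ∉ Slt ∪ Seq := by
    rintro (⟨_, h2, _⟩ | ⟨_, h2, _⟩) <;> exact h2 rfl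
  have hdisj : Disjoint Slt Seq := by
    rw [Set.disjoint_left]
    rintro lam ⟨_, _, h3⟩ ⟨_, _, h4⟩
    exact absurd h4 (ne_of_lt h3)
  rw [hdecomp, Set.ncard_insert_of_notMem h0 hfin,
    Set.ncard_union_eq hdisj (ltSet_finite h v) (muSet_finite h v),
    iota_eq_ltSet]
  unfold mu
  ring

/-- Crossing set of a path with the Brillouin hyperplanes of `Λ`. -/
def pathCross {n : ℕ} (Λ : Set (Euc n)) (γ : ℝ → Euc n) : Set (Euc n × ℝ) :=
  {p : Euc n × ℝ | p.1 ∈ Λ ∧ p.1 ≠ 0 ∧ p.2 ∈ Set.Ioo (0:ℝ) 1 ∧ γ p.2 ∈ Bplane p.1}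

open RealInnerProductSpace in
lemma W1 {n : ℕ} (Λ : Set (Euc n)) (v : Euc n) (γ : ℝ → Euc n) (hγ : Continuous γ)
    (h0 : γ 0 = 0) (h1 : γ 1 = v) :
    {lam : Euc n | lam ∈ Λ ∧ lam ≠ 0 ∧ ‖v - lam‖ < ‖v‖}.encard ≤ (pathCross Λ γ).encard := by
  set S := {lam : Euc n | lam ∈ Λ ∧ lam ≠ 0 ∧ ‖v - lam‖ < ‖v‖} with hS
  have hex : ∀ lam ∈ S, ∃ t : ℝ, t ∈ Set.Ioo (0:ℝ) 1 ∧ γ t ∈ Bplane lam := by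
    rintro lam ⟨hmem, hne, hlt⟩
    have hl2 : (0:ℝ) < ‖lam‖ ^ 2 := by have := norm_pos_iff.mpr hne; positivity
    have hcont : ContinuousOn (fun t : ℝ => 2 * ⟪γ t, lam⟫) (Set.Icc 0 1) :=
      (continuous_const.mul ((hγ.inner continuous_const))).continuousOn
    have hmem2 : ‖lam‖ ^ 2 ∈ Set.Ioo (2 * ⟪γ 0, lam⟫) (2 * ⟪γ 1, lam⟫) := by
      rw [h0, h1]
      constructor
      · simpa using hl2
      · exact (norm_sub_lt_iff lam v).mp hlt
    obtain ⟨t, ht, hgt⟩ := intermediate_value_Ioo (by norm_num : (0:ℝ) ≤ 1) hcont hmem2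
    exact ⟨t, ht, (mem_bplane_iff lam (γ t)).mpr hgt⟩
  choose! T hT1 hT2 using hex
  have himg : (fun lam => (lam, T lam)) '' S ⊆ pathCross Λ γ := by
    rintro p ⟨lam, hlam, rfl⟩
    exact ⟨hlam.1, hlam.2.1, hT1 lam hlam, hT2 lam hlam⟩
  have hinj : Set.InjOn (fun lam => (lam, T lam)) S := by
    intro a _ b _ hab
    exact congrArg Prod.fst hab
  calc S.encard = ((fun lam => (lam, T lam)) '' S).encard := (hinj.encard_image).symm
    _ ≤ (pathCross Λ γ).encard := Set.encard_le_encard himg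

open RealInnerProductSpace in
lemma W2 {n : ℕ} (Λ : Set (Euc n)) (v : Euc n) :
    (pathCross Λ (fun t : ℝ => t • v)).encard
      = ({lam : Euc n | lam ∈ Λ ∧ lam ≠ 0 ∧
          ∃ t : ℝ, 0 < t ∧ t < 1 ∧ t • v ∈ Bplane lam} : Set (Euc n)).encard := by
  have hinj : Set.InjOn Prod.fst (pathCross Λ (fun t : ℝ => t • v)) := by
    rintro ⟨a, s⟩ ⟨ha, hane, hs, hbs⟩ ⟨b, t⟩ ⟨hb, hbne, ht, hbt⟩ hab
    simp only at hab
    subst hab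
    have h1 := (smul_mem_bplane_iff a v s).mp hbs
    have h2 := (smul_mem_bplane_iff a v t).mp hbt
    have hl2 : (0:ℝ) < ‖a‖ ^ 2 := by have := norm_pos_iff.mpr hane; positivity
    have hip : ⟪v, a⟫ ≠ 0 := by
      intro h; rw [h] at h1; simp at h1; nlinarith
    have : s = t := by
      have := h1.trans h2.symm
      have h' : (2 * s - 2 * t) * ⟪v, a⟫ = 0 := by linarith
      rcases mul_eq_zero.mp h' with h | h
      · linarith
      · exact absurd h hip
    simp [this]
  have himg : Prod.fst '' (pathCross Λ (fun t : ℝ => t • v))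
      = {lam : Euc n | lam ∈ Λ ∧ lam ≠ 0 ∧ ∃ t : ℝ, 0 < t ∧ t < 1 ∧ t • v ∈ Bplane lam} := by
    ext lam
    constructor
    · rintro ⟨⟨a, t⟩, ⟨h1, h2, h3, h4⟩, rfl⟩
      exact ⟨h1, h2, t, h3.1, h3.2, h4⟩
    · rintro ⟨h1, h2, t, h3, h4, h5⟩
      exact ⟨(lam, t), ⟨h1, h2, ⟨h3, h4⟩, h5⟩, rfl⟩
  rw [← himg, hinj.encard_image]

lemma encard_eq_of_fiberwise {α β : Type*} (A B : Set (α × β))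
    (hA : ∀ t : β, {x : α | (x, t) ∈ A}.Finite) (hB : ∀ t : β, {x : α | (x, t) ∈ B}.Finite)
    (hcard : ∀ t : β, {x : α | (x, t) ∈ A}.ncard = {x : α | (x, t) ∈ B}.ncard) :
    A.encard = B.encard := by
  have key : ∀ t : β, Nonempty ({x : α | (x, t) ∈ A} ≃ {x : α | (x, t) ∈ B}) := by
    intro t
    have f1 := (hA t).fintype
    have f2 := (hB t).fintype
    refine ⟨Fintype.equivOfCardEq ?_⟩
    rw [← Nat.card_eq_fintype_card, ← Nat.card_eq_fintype_card,
      Nat.card_coe_set_eq, Nat.card_coe_set_eq, hcard t]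
  have e := fun t => (key t).some
  refine Set.encard_congr ?_
  refine ⟨fun p => ⟨(((e p.1.2) ⟨p.1.1, p.2⟩).1, p.1.2), ((e p.1.2) ⟨p.1.1, p.2⟩).2⟩,
    fun q => ⟨(((e q.1.2).symm ⟨q.1.1, q.2⟩).1, q.1.2), ((e q.1.2).symm ⟨q.1.1, q.2⟩).2⟩,
    ?_, ?_⟩
  · rintro ⟨⟨x, t⟩, hx⟩
    apply Subtype.ext
    simp only []
    congr 1
    have : (⟨((e t) ⟨x, hx⟩).1, ((e t) ⟨x, hx⟩).2⟩ :
        {x : α | (x, t) ∈ B}) = (e t) ⟨x, hx⟩ := Subtype.ext rfl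
    rw [this, Equiv.symm_apply_apply]
  · rintro ⟨⟨x, t⟩, hx⟩
    apply Subtype.ext
    simp only []
    congr 1
    have : (⟨((e t).symm ⟨x, hx⟩).1, ((e t).symm ⟨x, hx⟩).2⟩ :
        {x : α | (x, t) ∈ A}) = (e t).symm ⟨x, hx⟩ := Subtype.ext rfl
    rw [this, Equiv.apply_symm_apply]

lemma encard_eq_ncard {α : Type*} {s : Set α} (h : s.Finite) : s.encard = s.ncard := by
  have := h.fintype
  rw [s.ncard_eq_toFinset_card', h.encard_eq_coe_toFinset_card]
  congr 1
  simp

lemma iotaSet_eq {n : ℕ} (Λ : Set (Euc n)) (v : Euc n) :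
    {lam : Euc n | lam ∈ Λ ∧ lam ≠ 0 ∧ ∃ t : ℝ, 0 < t ∧ t < 1 ∧ t • v ∈ Bplane lam}
      = {lam : Euc n | lam ∈ Λ ∧ lam ≠ 0 ∧ ‖v - lam‖ < ‖v‖} := by
  ext lam
  simp only [mem_setOf_eq, and_congr_right_iff]
  intro _ hlam
  rw [show (∃ t : ℝ, 0 < t ∧ t < 1 ∧ t • v ∈ Bplane lam)
    ↔ (∃ t : ℝ, t ∈ Set.Ioo (0:ℝ) 1 ∧ t • v ∈ Bplane lam) by
      constructor
      · rintro ⟨t, a, b, c⟩; exact ⟨t, ⟨a, b⟩, c⟩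
      · rintro ⟨t, ⟨a, b⟩, c⟩; exact ⟨t, a, b, c⟩]
  constructor
  · rintro ⟨t, ⟨a, b⟩, c⟩
    exact (segment_iff lam v hlam).mp ⟨t, a, b, c⟩
  · intro h
    obtain ⟨t, a, b, c⟩ := (segment_iff lam v hlam).mpr h
    exact ⟨t, ⟨a, b⟩, c⟩

lemma pathCross_fiber {n : ℕ} (Λ : Set (Euc n)) (γ : ℝ → Euc n) (t : ℝ) :
    {x : Euc n | (x, t) ∈ pathCross Λ γ}
      = if t ∈ Set.Ioo (0:ℝ) 1
        then {lam : Euc n | lam ∈ Λ ∧ lam ≠ 0 ∧ ‖γ t - lam‖ = ‖γ t‖}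
        else ∅ := by
  split_ifs with ht
  · ext x
    simp only [mem_setOf_eq, pathCross]
    constructor
    · rintro ⟨h1, h2, _, h4⟩; exact ⟨h1, h2, h4.symm⟩
    · rintro ⟨h1, h2, h3⟩; exact ⟨h1, h2, ht, h3.symm⟩
  · ext x
    simp only [mem_setOf_eq, pathCross, mem_empty_iff_false, iff_false]
    rintro ⟨_, _, h3, _⟩
    exact ht h3

lemma iota_le_transport {n : ℕ} {Λ Λ' : Set (Euc n)} (hΛ : IsFullLattice Λ)
    (hΛ' : IsFullLattice Λ') (φ : Euc n ≃ₜ Euc n) (hφ0 : φ 0 = 0)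
    (hmu : ∀ w : Euc n, mu Λ' (φ w) = mu Λ w) (v : Euc n) :
    iota Λ' (φ v) ≤ iota Λ v := by
  set γ : ℝ → Euc n := fun t => t • v with hγdef
  have hγcont : Continuous γ := continuous_id.smul continuous_const
  have hγ'cont : Continuous (fun t => φ (γ t)) := φ.continuous.comp hγcont
  have hγ'0 : φ (γ 0) = 0 := by rw [hγdef]; simp [hφ0]
  have hγ'1 : φ (γ 1) = φ v := by rw [hγdef]; simp
  have step1 : (iota Λ' (φ v) : ℕ∞)
      = {lam : Euc n | lam ∈ Λ' ∧ lam ≠ 0 ∧ ‖φ v - lam‖ < ‖φ v‖}.encard := by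
    unfold iota
    rw [iotaSet_eq, encard_eq_ncard (ltSet_finite hΛ' (φ v))]
  have step2 := W1 Λ' (φ v) (fun t => φ (γ t)) hγ'cont hγ'0 hγ'1
  have step3 : (pathCross Λ' (fun t => φ (γ t))).encard = (pathCross Λ γ).encard := by
    apply encard_eq_of_fiberwise
    · intro t
      rw [pathCross_fiber]
      split_ifs
      · exact muSet_finite hΛ' _
      · exact finite_empty
    · intro t
      rw [pathCross_fiber]
      split_ifs
      · exact muSet_finite hΛ _
      · exact finite_empty
    · intro t
      rw [pathCross_fiber, pathCross_fiber]
      split_ifs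
      · exact hmu (γ t)
      · rfl
  have step4 : (pathCross Λ γ).encard = (iota Λ v : ℕ∞) := by
    rw [hγdef, W2 Λ v, iotaSet_eq, encard_eq_ncard (ltSet_finite hΛ v)]
    unfold iota
    rw [iotaSet_eq]
  have : (iota Λ' (φ v) : ℕ∞) ≤ (iota Λ v : ℕ∞) := by
    rw [step1, ← step4]
    exact step2.trans step3.le
  exact_mod_cast this

/-- A focal equivalence between full-rank lattices `Λ, Λ'` in `ℝⁿ`, `n ≥ 2`, maps the
`k`-th Brillouin set of `Λ` onto the `k`-th Brillouin set of `Λ'`, for every `k ≥ 1`. -/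
theorem focal_equiv_maps_brillouin {n : ℕ} (hn : 2 ≤ n)
    (Λ Λ' : Set (Euc n)) (hΛ : IsFullLattice Λ) (hΛ' : IsFullLattice Λ')
    (φ : Euc n ≃ₜ Euc n) (hφ0 : φ 0 = 0)
    (hφ : ∀ i : ℕ, 1 ≤ i → φ '' focalComp Λ i = focalComp Λ' i)
    (k : ℕ) (hk : 1 ≤ k) :
    φ '' brillouin Λ k = brillouin Λ' k := by
  have hmu : ∀ v : Euc n, mu Λ' (φ v) = mu Λ v := by
    intro v
    have h1 : v ∈ focalComp Λ (mu Λ v + 1) := by simp [focalComp]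
    have h2 := hφ (mu Λ v + 1) (by omega)
    have h3 : φ v ∈ focalComp Λ' (mu Λ v + 1) := h2 ▸ Set.mem_image_of_mem φ h1
    simpa [focalComp] using h3
  have hmu' : ∀ w : Euc n, mu Λ (φ.symm w) = mu Λ' w := by
    intro w
    have := hmu (φ.symm w)
    rw [Homeomorph.apply_symm_apply] at this
    exact this.symm
  have hφ0' : φ.symm 0 = 0 := by
    conv_lhs => rw [← hφ0]
    rw [Homeomorph.symm_apply_apply]
  have hiota : ∀ v : Euc n, iota Λ' (φ v) = iota Λ v := by
    intro v
    refine le_antisymm (iota_le_transport hΛ hΛ' φ hφ0 hmu v) ?_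
    have := iota_le_transport hΛ' hΛ φ.symm hφ0' hmu' (φ v)
    rwa [Homeomorph.symm_apply_apply] at this
  have hmem : ∀ v : Euc n, v ∈ brillouin Λ k ↔ φ v ∈ brillouin Λ' k := by
    intro v
    unfold brillouin
    rw [Set.mem_setOf_eq, Set.mem_setOf_eq, count_decomp hΛ v, count_decomp hΛ' (φ v),
      hiota v, hmu v]
  ext w
  constructor
  · rintro ⟨v, hv, rfl⟩
    exact (hmem v).mp hv
  · intro hw
    refine ⟨φ.symm w, ?_, Homeomorph.apply_symm_apply φ w⟩
    rw [hmem (φ.symm w), Homeomorph.apply_symm_apply]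
    exact hw
end
end

section
/- Let n ≥ 2, let Λ, Λ̃ ⊆ ℝⁿ be full-rank lattices, and let φ : ℝⁿ → ℝⁿ be a focal equivalence between Λ and Λ̃ (a homeomorphism with φ(0) = 0 and φ(σ_i(Λ)) = σ_i(Λ̃) for all i ≥ 1). Suppose λ_1, …, λ_n ∈ Λ \ {0} are linearly independent and λ̃_1, …, λ̃_n ∈ Λ̃ \ {0} satisfy φ(V_{λ_s}) = V_{λ̃_s} for each s. Then λ̃_1, …, λ̃_n are linearly independent. -/
open Set

noncomputable section

lemma Bplane_eq {n : ℕ} (lam : Euc n) :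
    Bplane lam = {v : Euc n | (inner ℝ v lam : ℝ) = ‖lam‖ ^ 2 / 2} := by
  ext v
  simp only [Bplane, Set.mem_setOf_eq]
  constructor
  · intro h
    have h2 : ‖v‖ ^ 2 = ‖v - lam‖ ^ 2 := by rw [h]
    rw [norm_sub_sq_real] at h2
    linarith
  · intro h
    have h2 : ‖v‖ ^ 2 = ‖v - lam‖ ^ 2 := by rw [norm_sub_sq_real]; linarith
    nlinarith [norm_nonneg v, norm_nonneg (v - lam)]


/-- A focal equivalence preserves linear independence of lattice vectors determining
Brillouin hyperplanes: if `φ(V_{λ_s}) = V_{λ'_s}` for each `s` and `λ_1, …, λ_n` are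
linearly independent, then so are `λ'_1, …, λ'_n`. -/
theorem focal_equiv_preserves_independence {n : ℕ} (hn : 2 ≤ n)
    (Λ Λ' : Set (Euc n)) (hΛ : IsFullLattice Λ) (hΛ' : IsFullLattice Λ')
    (φ : Euc n ≃ₜ Euc n) (hφ0 : φ 0 = 0)
    (hφ : ∀ i : ℕ, 1 ≤ i → φ '' focalComp Λ i = focalComp Λ' i)
    (lams lams' : Fin n → Euc n)
    (hmem : ∀ s, lams s ∈ Λ ∧ lams s ≠ 0)
    (hmem' : ∀ s, lams' s ∈ Λ' ∧ lams' s ≠ 0)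
    (hind : LinearIndependent ℝ lams)
    (him : ∀ s, φ '' Bplane (lams s) = Bplane (lams' s)) :
    LinearIndependent ℝ lams' := by
  classical
  haveI : Nonempty (Fin n) := ⟨⟨0, by omega⟩⟩
  have hcard : Fintype.card (Fin n) = Module.finrank ℝ (Euc n) := by
    simp [finrank_euclideanSpace]
  have hspan : Submodule.span ℝ (Set.range lams) = ⊤ :=
    hind.span_eq_top_of_card_eq_finrank hcard
  set T : Euc n →ₗ[ℝ] (Fin n → ℝ) :=
    LinearMap.pi (fun s => (innerSL ℝ (lams s)).toLinearMap) with hT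
  have hTapply : ∀ v s, T v s = (inner ℝ (lams s) v : ℝ) := fun v s => rfl
  have hTinj : Function.Injective T := by
    rw [← LinearMap.ker_eq_bot, Submodule.eq_bot_iff]
    intro v hv
    have h0 : ∀ s, (inner ℝ (lams s) v : ℝ) = 0 := by
      intro s
      have h1 : T v = 0 := hv
      simpa [hTapply] using congrFun h1 s
    have hperp : ∀ u ∈ Submodule.span ℝ (Set.range lams), (inner ℝ u v : ℝ) = 0 := by
      intro u hu
      induction hu using Submodule.span_induction with
      | mem x hx => obtain ⟨s, rfl⟩ := hx; exact h0 s
      | zero => simp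
      | add x y _ _ hx hy => rw [inner_add_left, hx, hy]; ring
      | smul a x _ hx => rw [real_inner_smul_left, hx]; ring
    exact inner_self_eq_zero.mp (hperp v (hspan ▸ Submodule.mem_top))
  have hTsurj : Function.Surjective T := by
    have : Module.finrank ℝ (Euc n) = Module.finrank ℝ (Fin n → ℝ) := by
      simp [finrank_euclideanSpace]
    exact (LinearMap.injective_iff_surjective_of_finrank_eq_finrank this).mp hTinj
  -- the intersection of the Bplanes is a singleton
  obtain ⟨v₀, hv₀⟩ := hTsurj (fun s => ‖lams s‖ ^ 2 / 2)
  have hsingle : (⋂ s, Bplane (lams s)) = {v₀} := by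
    ext v
    simp only [Set.mem_iInter, Set.mem_singleton_iff, Bplane_eq, Set.mem_setOf_eq]
    constructor
    · intro h
      apply hTinj
      funext s
      rw [hTapply, hv₀, real_inner_comm]
      exact h s
    · rintro rfl s
      rw [real_inner_comm]
      exact congrFun hv₀ s
  have hsingle' : (⋂ s, Bplane (lams' s)) = {φ v₀} := by
    have := Set.image_iInter φ.bijective (fun s => Bplane (lams s))
    rw [hsingle] at this
    simp only [him] at this
    rw [← this, Set.image_singleton]
  -- now prove independence
  by_contra hdep
  have hspan' : Submodule.span ℝ (Set.range lams') ≠ ⊤ := by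
    intro htop
    exact hdep (linearIndependent_of_top_le_span_of_card_eq_finrank htop.ge hcard)
  have hbot : (Submodule.span ℝ (Set.range lams'))ᗮ ≠ ⊥ := by
    intro h; exact hspan' (Submodule.orthogonal_eq_bot_iff.mp h)
  obtain ⟨w, hw, hw0⟩ := Submodule.exists_mem_ne_zero_of_ne_bot hbot
  have hws : ∀ s, (inner ℝ (φ v₀ + w) (lams' s) : ℝ) = (inner ℝ (φ v₀) (lams' s) : ℝ) := by
    intro s
    rw [inner_add_left]
    have : (inner ℝ w (lams' s) : ℝ) = 0 :=
      (Submodule.mem_orthogonal' _ w).mp hw _ (Submodule.subset_span ⟨s, rfl⟩)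
    rw [this]; ring
  have hmemφ : φ v₀ ∈ ⋂ s, Bplane (lams' s) := hsingle' ▸ rfl
  have hmemw : φ v₀ + w ∈ ⋂ s, Bplane (lams' s) := by
    simp only [Set.mem_iInter, Bplane_eq, Set.mem_setOf_eq] at hmemφ ⊢
    intro s
    rw [hws s]
    exact hmemφ s
  rw [hsingle'] at hmemw
  exact hw0 (by simpa using hmemw)
end
end
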